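/- Let 1 < q < 2, p > 4, A > 0, B ≥ 0, D > 0, and define s(t) = A t^{2−q} + B t^{4−q} − D t^{p−q} for t > 0 and, for F ∈ ℝ, φ_F(t) = (A/2)t² + (B/4)t⁴ − (F/q)t^q − (D/p)t^p for t ≥ 0. Let t_max be the unique maximizer of s on (0,∞). If F ≤ 0, then there is a unique t⁻ > t_max with s(t⁻) = F; t⁻ is the unique solution of s(t) = F in (0,∞); φ_F is strictly increasing on (0, t⁻) and strictly decreasing on (t⁻, ∞); and φ_F(t⁻) = sup_{t ≥ 0} φ_F(t). -/

import Mathlib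

open Set

/-- The fibering auxiliary function `s(t) = A t^{2-q} + B t^{4-q} - D t^{p-q}`. -/
noncomputable def sFib (q p A B D t : ℝ) : ℝ :=
  A * t ^ (2 - q) + B * t ^ (4 - q) - D * t ^ (p - q)

/-- The fibering map `φ_F(t) = (A/2)t² + (B/4)t⁴ - (F/q)t^q - (D/p)t^p`. -/
noncomputable def phiFib (q p A B D F t : ℝ) : ℝ :=
  A / 2 * t ^ (2 : ℝ) + B / 4 * t ^ (4 : ℝ) - F / q * t ^ q - D / p * t ^ p

noncomputable def hAux (q p A B D t : ℝ) : ℝ :=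
  A * (2 - q) + B * (4 - q) * t ^ (2:ℝ) - D * (p - q) * t ^ (p - 2)

lemma sFib_hasDerivAt (q p A B D : ℝ) {t : ℝ} (ht : 0 < t) :
    HasDerivAt (sFib q p A B D) (t ^ (1 - q) * hAux q p A B D t) t := by
  have e2 : HasDerivAt (fun x : ℝ => x ^ (2 - q)) ((2 - q) * t ^ (2 - q - 1)) t :=
    Real.hasDerivAt_rpow_const (Or.inl ht.ne')
  have e4 : HasDerivAt (fun x : ℝ => x ^ (4 - q)) ((4 - q) * t ^ (4 - q - 1)) t :=
    Real.hasDerivAt_rpow_const (Or.inl ht.ne')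
  have ep : HasDerivAt (fun x : ℝ => x ^ (p - q)) ((p - q) * t ^ (p - q - 1)) t :=
    Real.hasDerivAt_rpow_const (Or.inl ht.ne')
  have h := ((e2.const_mul A).add (e4.const_mul B)).sub (ep.const_mul D)
  refine h.congr_deriv ?_
  have r2 : t ^ (2 - q - 1) = t ^ (1 - q) := by ring_nf
  have r4 : t ^ (4 - q - 1) = t ^ (1 - q) * t ^ (2:ℝ) := by
    rw [← Real.rpow_add ht]; ring_nf
  have rp : t ^ (p - q - 1) = t ^ (1 - q) * t ^ (p - 2) := by
    rw [← Real.rpow_add ht]; ring_nf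
  rw [r2, r4, rp]; unfold hAux; ring

lemma phiFib_hasDerivAt (q p A B D F : ℝ) (hq1 : 1 < q) (hp : 4 < p) {t : ℝ} (ht : 0 < t) :
    HasDerivAt (phiFib q p A B D F) (t ^ (q - 1) * (sFib q p A B D t - F)) t := by
  have hq0 : q ≠ 0 := by linarith
  have hp0 : p ≠ 0 := by linarith
  have e2 : HasDerivAt (fun x : ℝ => x ^ (2:ℝ)) ((2:ℝ) * t ^ ((2:ℝ) - 1)) t :=
    Real.hasDerivAt_rpow_const (Or.inl ht.ne')
  have e4 : HasDerivAt (fun x : ℝ => x ^ (4:ℝ)) ((4:ℝ) * t ^ ((4:ℝ) - 1)) t :=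
    Real.hasDerivAt_rpow_const (Or.inl ht.ne')
  have eq' : HasDerivAt (fun x : ℝ => x ^ q) (q * t ^ (q - 1)) t :=
    Real.hasDerivAt_rpow_const (Or.inl ht.ne')
  have ep : HasDerivAt (fun x : ℝ => x ^ p) (p * t ^ (p - 1)) t :=
    Real.hasDerivAt_rpow_const (Or.inl ht.ne')
  have h := (((e2.const_mul (A/2)).add (e4.const_mul (B/4))).sub
      (eq'.const_mul (F/q))).sub (ep.const_mul (D/p))
  refine h.congr_deriv ?_
  unfold sFib
  have r1 : t ^ (q-1) * t ^ (2-q) = t ^ ((2:ℝ) - 1) := by rw [← Real.rpow_add ht]; ring_nf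
  have r3 : t ^ (q-1) * t ^ (4-q) = t ^ ((4:ℝ) - 1) := by rw [← Real.rpow_add ht]; ring_nf
  have rp : t ^ (q-1) * t ^ (p-q) = t ^ (p - 1) := by rw [← Real.rpow_add ht]; ring_nf
  have key : t ^ (q-1) * (A*t^(2-q) + B*t^(4-q) - D*t^(p-q) - F)
      = A * (t^(q-1)*t^(2-q)) + B*(t^(q-1)*t^(4-q)) - D*(t^(q-1)*t^(p-q)) - F*t^(q-1) := by ring
  rw [key, r1, r3, rp]
  field_simp
  ring

/-- if `hAux b ≥ 0` and `0 < a < b` then `hAux a > 0`. -/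
lemma hAux_pos_of_lt (q p A B D : ℝ) (hq2 : q < 2) (hp : 4 < p)
    (hA : 0 < A) (hB : 0 ≤ B) (hD : 0 < D) {a b : ℝ} (ha : 0 < a) (hab : a < b)
    (hb : 0 ≤ hAux q p A B D b) : 0 < hAux q p A B D a := by
  have hb0 : 0 < b := ha.trans hab
  have hqp : q < p := by linarith
  unfold hAux at *
  have hX : (0:ℝ) < a ^ (p-2) := Real.rpow_pos_of_pos ha _
  have hY : (0:ℝ) < b ^ (p-2) := Real.rpow_pos_of_pos hb0 _
  have hXY : a ^ (p-2) < b ^ (p-2) := Real.rpow_lt_rpow ha.le hab (by linarith)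
  have ea : a ^ (p-2) = a ^ (2:ℝ) * a ^ (p-4) := by
    rw [← Real.rpow_add ha]; ring_nf
  have eb : b ^ (p-2) = b ^ (2:ℝ) * b ^ (p-4) := by
    rw [← Real.rpow_add hb0]; ring_nf
  have h4 : a ^ (p-4) ≤ b ^ (p-4) := Real.rpow_le_rpow ha.le hab.le (by linarith)
  have ha2 : (0:ℝ) < a ^ (2:ℝ) := Real.rpow_pos_of_pos ha _
  have hb2 : (0:ℝ) < b ^ (2:ℝ) := Real.rpow_pos_of_pos hb0 _
  have ha4 : (0:ℝ) < a ^ (p-4) := Real.rpow_pos_of_pos ha _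
  have ha2b : a ^ (2:ℝ) ≤ b ^ (2:ℝ) := Real.rpow_le_rpow ha.le hab.le (by norm_num)
  -- key: a² * b^{p-2} - b² * a^{p-2} ≥ 0
  have key : b ^ (2:ℝ) * a ^ (p-2) ≤ a ^ (2:ℝ) * b ^ (p-2) := by
    rw [ea, eb]
    calc b ^ (2:ℝ) * (a ^ (2:ℝ) * a ^ (p-4)) = a ^ (2:ℝ) * (b ^ (2:ℝ) * a ^ (p-4)) := by ring
    _ ≤ a ^ (2:ℝ) * (b ^ (2:ℝ) * b ^ (p-4)) := by
        apply mul_le_mul_of_nonneg_left _ ha2.le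
        exact mul_le_mul_of_nonneg_left h4 hb2.le
  -- from hb: D(p-q) b^{p-2} ≤ A(2-q) + B(4-q) b²
  -- multiply by X/Y etc.
  have step1 : D*(p-q) * (a ^ (p-2) * b ^ (p-2)) ≤ (A*(2-q) + B*(4-q)*b^(2:ℝ)) * a ^ (p-2) := by
    nlinarith [mul_le_mul_of_nonneg_right (by linarith : D*(p-q)*b^(p-2) ≤ A*(2-q) + B*(4-q)*b^(2:ℝ)) hX.le]
  have step2 : (A*(2-q) + B*(4-q)*b^(2:ℝ)) * a ^ (p-2) < (A*(2-q) + B*(4-q)*a^(2:ℝ)) * b ^ (p-2) := by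
    have t1 : A*(2-q) * a ^ (p-2) < A*(2-q) * b ^ (p-2) := by
      apply mul_lt_mul_of_pos_left hXY; nlinarith
    have t2 : B*(4-q) * (b^(2:ℝ) * a ^ (p-2)) ≤ B*(4-q) * (a^(2:ℝ) * b ^ (p-2)) := by
      apply mul_le_mul_of_nonneg_left key; nlinarith
    nlinarith [t1, t2]
  have final : D*(p-q) * (a ^ (p-2) * b ^ (p-2)) < (A*(2-q) + B*(4-q)*a^(2:ℝ)) * b ^ (p-2) :=
    lt_of_le_of_lt step1 step2
  nlinarith [final, hY]

/-- where `hAux > 0`, `sFib > 0`. -/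
lemma sFib_pos_of_hAux_pos (q p A B D : ℝ) (hq2 : q < 2) (hp : 4 < p)
    (hA : 0 < A) (hB : 0 ≤ B) (hD : 0 < D) {t : ℝ} (ht : 0 < t)
    (h : 0 < hAux q p A B D t) : 0 < sFib q p A B D t := by
  unfold hAux at h
  unfold sFib
  have e4 : t ^ (4-q) = t ^ (2-q) * t ^ (2:ℝ) := by rw [← Real.rpow_add ht]; ring_nf
  have ep : t ^ (p-q) = t ^ (2-q) * t ^ (p-2) := by rw [← Real.rpow_add ht]; ring_nf
  rw [e4, ep]
  have h2q : (0:ℝ) < t ^ (2-q) := Real.rpow_pos_of_pos ht _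
  have h2 : (0:ℝ) < t ^ (2:ℝ) := Real.rpow_pos_of_pos ht _
  have hp2 : (0:ℝ) < t ^ (p-2) := Real.rpow_pos_of_pos ht _
  have core : 0 < A + B * t ^ (2:ℝ) - D * t ^ (p-2) := by
    nlinarith [mul_pos hA (show (0:ℝ) < p-2 by linarith),
      mul_nonneg (mul_nonneg hB h2.le) (show (0:ℝ) ≤ p-4 by linarith),
      show (0:ℝ) < p - q by linarith]
  nlinarith [mul_pos h2q core]

/-- Lemma 2.9(i) of the paper: for `F ≤ 0` there is a unique `t⁻ > t_max` with
`s(t⁻) = F`; it is the unique solution of `s(t) = F` in `(0,∞)`; `φ_F` is strictly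
increasing on `(0, t⁻)`, strictly decreasing on `(t⁻, ∞)`, and `φ_F(t⁻) = sup_{t ≥ 0} φ_F(t)`. -/
theorem phiFib_shape_of_nonpos (q p A B D F : ℝ) (hq1 : 1 < q) (hq2 : q < 2) (hp : 4 < p)
    (hA : 0 < A) (hB : 0 ≤ B) (hD : 0 < D)
    (tmax : ℝ) (htmax : 0 < tmax)
    (hmax : ∀ t, 0 < t → t ≠ tmax → sFib q p A B D t < sFib q p A B D tmax)
    (hF : F ≤ 0) :
    ∃ tm : ℝ, tmax < tm ∧ sFib q p A B D tm = F ∧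
      (∀ t, 0 < t → sFib q p A B D t = F → t = tm) ∧
      StrictMonoOn (phiFib q p A B D F) (Ioo 0 tm) ∧
      StrictAntiOn (phiFib q p A B D F) (Ioi tm) ∧
      (∀ t, 0 ≤ t → phiFib q p A B D F t ≤ phiFib q p A B D F tm) := by
  set s := sFib q p A B D with hs
  set φ := phiFib q p A B D F with hφ
  have contS : ∀ (U : Set ℝ), (∀ x ∈ U, (0:ℝ) < x) → ContinuousOn s U := by
    intro U hU x hx
    exact ((sFib_hasDerivAt q p A B D (hU x hx)).differentiableAt.continuousAt).continuousWithinAt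
  -- hAux is negative to the right of tmax
  have hneg : ∀ t, tmax < t → hAux q p A B D t < 0 := by
    intro t htt
    by_contra hcon
    push_neg at hcon
    have smono : StrictMonoOn s (Ioc 0 t) := by
      apply strictMonoOn_of_deriv_pos (convex_Ioc _ _) (contS _ (fun x hx => hx.1))
      intro x hx
      rw [interior_Ioc] at hx
      rw [(sFib_hasDerivAt q p A B D hx.1).deriv]
      exact mul_pos (Real.rpow_pos_of_pos hx.1 _)
        (hAux_pos_of_lt q p A B D hq2 hp hA hB hD hx.1 hx.2 hcon)
    have h1 : s tmax < s t :=
      smono ⟨htmax, by linarith⟩ ⟨htmax.trans htt, le_refl t⟩ htt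
    exact absurd h1 (not_lt.mpr (hmax t (htmax.trans htt) (by linarith [htt])).le)
  -- hAux is positive to the left of tmax
  have hposl : ∀ t, 0 < t → t < tmax → 0 < hAux q p A B D t := by
    intro t ht htt
    by_contra hcon
    push_neg at hcon
    have hneg' : ∀ y, t < y → hAux q p A B D y < 0 := by
      intro y hy
      by_contra hcon2
      push_neg at hcon2
      exact absurd (hAux_pos_of_lt q p A B D hq2 hp hA hB hD ht hy hcon2) (not_lt.mpr hcon)
    have santi : StrictAntiOn s (Ici t) := by
      apply strictAntiOn_of_deriv_neg (convex_Ici _) (contS _ (fun x hx => ht.trans_le hx))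
      intro x hx
      rw [interior_Ici] at hx
      rw [(sFib_hasDerivAt q p A B D (ht.trans hx)).deriv]
      exact mul_neg_of_pos_of_neg (Real.rpow_pos_of_pos (ht.trans hx) _) (hneg' x hx)
    have h1 : s tmax < s t := santi (le_refl t) (le_of_lt htt) htt
    exact absurd h1 (not_lt.mpr (hmax t ht (by linarith)).le)
  -- s is strictly decreasing on [tmax, ∞)
  have sAnti : StrictAntiOn s (Ici tmax) := by
    apply strictAntiOn_of_deriv_neg (convex_Ici _) (contS _ (fun x hx => htmax.trans_le hx))
    intro x hx
    rw [interior_Ici] at hx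
    rw [(sFib_hasDerivAt q p A B D (htmax.trans hx)).deriv]
    exact mul_neg_of_pos_of_neg (Real.rpow_pos_of_pos (htmax.trans hx) _) (hneg x hx)
  -- s is positive on (0, tmax]
  have spos : ∀ t, 0 < t → t ≤ tmax → 0 < s t := by
    intro t ht htle
    rcases lt_or_eq_of_le htle with hlt | heq
    · exact sFib_pos_of_hAux_pos q p A B D hq2 hp hA hB hD ht (hposl t ht hlt)
    · have h2 : 0 < s (tmax/2) :=
        sFib_pos_of_hAux_pos q p A B D hq2 hp hA hB hD (by linarith)
          (hposl _ (by linarith) (by linarith))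
      have := hmax (tmax/2) (by linarith) (by intro h; linarith [h ▸ htmax])
      rw [heq]; linarith
  have sposmax : 0 < s tmax := spos tmax htmax le_rfl
  -- find T > tmax with s T < F
  set C := (A + B + 1 - F) / D with hC
  have hCpos : 0 < C := div_pos (by linarith) hD
  set T := max (max 1 (tmax+1)) (C ^ (p-4)⁻¹) with hT
  have hT1 : (1:ℝ) ≤ T := le_trans (le_max_left _ _) (le_max_left _ _)
  have hTm : tmax < T := lt_of_lt_of_le (by linarith) (le_trans (le_max_right 1 (tmax+1)) (le_max_left _ _))
  have hT0 : (0:ℝ) < T := by linarith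
  have hTC : C ≤ T ^ (p-4) := by
    have h1 : C ^ (p-4)⁻¹ ≤ T := le_max_right _ _
    have h2 : (C ^ (p-4)⁻¹) ^ (p-4) ≤ T ^ (p-4) :=
      Real.rpow_le_rpow (Real.rpow_nonneg hCpos.le _) h1 (by linarith)
    rwa [Real.rpow_inv_rpow hCpos.le (by intro h; linarith [h])] at h2
  have hsT : s T < F := by
    have e1 : T ^ (2-q) ≤ T ^ (4-q) := Real.rpow_le_rpow_of_exponent_le hT1 (by linarith)
    have e2 : T ^ (p-q) = T ^ (4-q) * T ^ (p-4) := by rw [← Real.rpow_add hT0]; ring_nf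
    have e3 : (1:ℝ) ≤ T ^ (4-q) := by
      have := Real.rpow_le_rpow_of_exponent_le hT1 (show (0:ℝ) ≤ 4-q by linarith)
      rwa [Real.rpow_zero] at this
    have e4 : A + B + 1 - F ≤ D * T ^ (p-4) := by
      have := mul_le_mul_of_nonneg_left hTC hD.le
      rw [hC] at this
      rwa [mul_div_cancel₀ _ hD.ne'] at this
    have e5 : s T ≤ T ^ (4-q) * ((A + B) - D * T ^ (p-4)) := by
      rw [hs]; unfold sFib
      rw [e2]
      have hT4 : (0:ℝ) < T ^ (4-q) := Real.rpow_pos_of_pos hT0 _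
      nlinarith [mul_le_mul_of_nonneg_left e1 hA.le]
    have e6 : T ^ (4-q) * ((A + B) - D * T ^ (p-4)) ≤ (F - 1) := by
      have h7 : (A + B) - D * T ^ (p-4) ≤ F - 1 := by linarith
      nlinarith [e3, h7]
    linarith
  -- IVT to get tm
  have cont : ContinuousOn s (Icc tmax T) := contS _ (fun x hx => htmax.trans_le hx.1)
  have hmem : F ∈ Icc (s T) (s tmax) := ⟨hsT.le, by linarith⟩
  obtain ⟨tm, htmIcc, hstm⟩ := intermediate_value_Icc' hTm.le cont hmem
  have htmne : tm ≠ tmax := by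
    intro h; rw [h] at hstm; linarith
  have htmgt : tmax < tm := lt_of_le_of_ne htmIcc.1 (Ne.symm htmne)
  have htm0 : 0 < tm := htmax.trans htmgt
  refine ⟨tm, htmgt, hstm, ?_, ?_, ?_, ?_⟩
  · -- uniqueness
    intro t ht hst
    have htgt : tmax < t := by
      by_contra hcon
      push_neg at hcon
      have := spos t ht hcon
      linarith
    exact sAnti.injOn (mem_Ici.mpr htgt.le) (mem_Ici.mpr htmgt.le) (by rw [hst, hstm])
  all_goals {
    have contφ : Continuous φ := by
      rw [hφ]; unfold phiFib
      have c2 : Continuous fun t : ℝ => t ^ (2:ℝ) := Real.continuous_rpow_const (by norm_num)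
      have c4 : Continuous fun t : ℝ => t ^ (4:ℝ) := Real.continuous_rpow_const (by norm_num)
      have cq : Continuous fun t : ℝ => t ^ q := Real.continuous_rpow_const (by linarith)
      have cp : Continuous fun t : ℝ => t ^ p := Real.continuous_rpow_const (by linarith)
      exact (((continuous_const.mul c2).add (continuous_const.mul c4)).sub (continuous_const.mul cq)).sub (continuous_const.mul cp)
    have phimono : StrictMonoOn φ (Icc 0 tm) := by
      apply strictMonoOn_of_deriv_pos (convex_Icc _ _) contφ.continuousOn
      intro x hx
      rw [interior_Icc] at hx
      rw [(phiFib_hasDerivAt q p A B D F hq1 hp hx.1).deriv]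
      apply mul_pos (Real.rpow_pos_of_pos hx.1 _)
      rcases le_or_gt x tmax with hle | hgt
      · have := spos x hx.1 hle; linarith
      · have := sAnti (mem_Ici.mpr hgt.le) (mem_Ici.mpr htmgt.le) hx.2
        rw [hstm] at this; linarith
    have phianti : StrictAntiOn φ (Ici tm) := by
      apply strictAntiOn_of_deriv_neg (convex_Ici _) contφ.continuousOn
      intro x hx
      rw [interior_Ici] at hx
      rw [(phiFib_hasDerivAt q p A B D F hq1 hp (htm0.trans hx)).deriv]
      apply mul_neg_of_pos_of_neg (Real.rpow_pos_of_pos (htm0.trans hx) _)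
      have := sAnti (mem_Ici.mpr htmgt.le) (mem_Ici.mpr (htmgt.trans hx).le) hx
      rw [hstm] at this; linarith
    first
    | exact phimono.mono Ioo_subset_Icc_self
    | exact phianti.mono Ioi_subset_Ici_self
    | { intro t ht0
        rcases lt_trichotomy t tm with hlt | heq | hgt
        · exact (phimono ⟨ht0, hlt.le⟩ ⟨htm0.le, le_rfl⟩ hlt).le
        · rw [heq]
        · exact (phianti (mem_Ici.mpr le_rfl) (mem_Ici.mpr hgt.le) hgt).le }
  }
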